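/- Let A be a unital C*-algebra and X ∈ A a selfadjoint element whose spectrum is contained in the open interval (−1, ∞). Let q be a real number and N a natural number. Then the continuous functional calculus satisfies the exact operator-level remainder factorization: cfc(x ↦ (1+x)^q, X) = Σ_{n=0}^{N} [ (∏_{i=0}^{n−1}(q−i)) / n! ] • Xⁿ + X^{N+1} · cfc(x ↦ (∏_{i=0}^{N}(q−i))/N! · ∫₀¹ (1−t)^N (1+t·x)^{q−N−1} dt, X). -/

import Mathlib

open Finset

private lemma one_add_mul_pos' {x t : ℝ} (hx : -1 < x) (ht : t ∈ Set.Icc (0:ℝ) 1) :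
    0 < 1 + t * x := by
  rcases le_or_gt 0 x with h | h
  · nlinarith [ht.1]
  · nlinarith [ht.2]

private lemma contOn_integrand {x : ℝ} (hx : -1 < x) (N : ℕ) (r : ℝ) :
    ContinuousOn (fun t : ℝ => (1 - t) ^ N * (1 + t * x) ^ r) (Set.Icc 0 1) := by
  apply ContinuousOn.mul (by fun_prop)
  apply ContinuousOn.rpow_const (by fun_prop)
  intro t ht
  exact Or.inl (one_add_mul_pos' hx ht).ne'

private lemma intInt_integrand {x : ℝ} (hx : -1 < x) (N : ℕ) (r : ℝ) :
    IntervalIntegrable (fun t : ℝ => (1 - t) ^ N * (1 + t * x) ^ r)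
      MeasureTheory.volume 0 1 := by
  apply ContinuousOn.intervalIntegrable
  rw [Set.uIcc_of_le zero_le_one]
  exact contOn_integrand hx N r

private lemma base_int {x : ℝ} (hx : -1 < x) (q : ℝ) :
    (1 + x) ^ q = 1 + q * x * ∫ t in (0:ℝ)..1, (1 + t * x) ^ (q - 1) := by
  have h : ∫ t in (0:ℝ)..1, q * (1 + t * x) ^ (q - 1) * x =
      (1 + 1 * x) ^ q - (1 + 0 * x) ^ q := by
    refine intervalIntegral.integral_eq_sub_of_hasDerivAt
      (f := fun t : ℝ => (1 + t * x) ^ q) ?_ ?_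
    · intro t ht
      rw [Set.uIcc_of_le zero_le_one] at ht
      have h2 := (HasDerivAt.const_add 1 (hasDerivAt_mul_const x)).rpow_const (p := q)
        (Or.inl (one_add_mul_pos' hx ht).ne')
      exact h2.congr_deriv (by ring)
    · have := (intInt_integrand hx 0 (q - 1)).const_mul q |>.mul_const x
      simpa using this
  have h2 : ∫ t in (0:ℝ)..1, q * (1 + t * x) ^ (q - 1) * x =
      q * x * ∫ t in (0:ℝ)..1, (1 + t * x) ^ (q - 1) := by
    rw [← intervalIntegral.integral_const_mul]
    apply intervalIntegral.integral_congr
    intro t _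
    ring
  rw [h2] at h
  simp only [one_mul, zero_mul, add_zero, Real.one_rpow] at h
  linarith

private lemma step_int {x : ℝ} (hx : -1 < x) (M : ℕ) (r : ℝ) :
    ((M:ℝ) + 1) * ∫ t in (0:ℝ)..1, (1 - t) ^ M * (1 + t * x) ^ r =
      1 + r * x * ∫ t in (0:ℝ)..1, (1 - t) ^ (M + 1) * (1 + t * x) ^ (r - 1) := by
  have hderiv : ∀ t ∈ Set.uIcc (0:ℝ) 1,
      HasDerivAt (fun t : ℝ => (1 - t) ^ (M + 1) * (1 + t * x) ^ r)
        ((-((M:ℝ) + 1)) * ((1 - t) ^ M * (1 + t * x) ^ r) +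
          (r * x) * ((1 - t) ^ (M + 1) * (1 + t * x) ^ (r - 1))) t := by
    intro t ht
    rw [Set.uIcc_of_le zero_le_one] at ht
    have h1 : HasDerivAt (fun t : ℝ => (1 - t) ^ (M + 1))
        (((M:ℝ) + 1) * (1 - t) ^ M * (-1)) t := by
      have := (hasDerivAt_pow (M + 1) (1 - t)).comp t ((hasDerivAt_id t).const_sub 1)
      exact this.congr_deriv (by rw [Nat.add_sub_cancel]; push_cast; ring)
    have h2 := (HasDerivAt.const_add 1 (hasDerivAt_mul_const x)).rpow_const (p := r)
      (Or.inl (one_add_mul_pos' hx ht).ne')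
    have := h1.mul h2
    exact this.congr_deriv (by ring)
  have hint1 := (intInt_integrand hx M r).const_mul (-((M:ℝ) + 1))
  have hint2 := (intInt_integrand hx (M + 1) (r - 1)).const_mul (r * x)
  have key := intervalIntegral.integral_eq_sub_of_hasDerivAt hderiv (hint1.add hint2)
  rw [intervalIntegral.integral_add hint1 hint2,
    intervalIntegral.integral_const_mul, intervalIntegral.integral_const_mul] at key
  simp only [sub_self, one_mul, zero_mul, add_zero, mul_zero, sub_zero, one_pow,
    Real.one_rpow, zero_pow (Nat.succ_ne_zero M)] at key
  linarith

private lemma scalar_taylor (q : ℝ) {x : ℝ} (hx : -1 < x) (N : ℕ) :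
    (1 + x) ^ q =
      (∑ n ∈ Finset.range (N + 1), (∏ i ∈ Finset.range n, (q - i)) / (n.factorial : ℝ) * x ^ n) +
      x ^ (N + 1) * ((∏ i ∈ Finset.range (N + 1), (q - i)) / (N.factorial : ℝ) *
        ∫ t in (0:ℝ)..1, (1 - t) ^ N * (1 + t * x) ^ (q - N - 1)) := by
  induction N with
  | zero =>
      rw [base_int hx q, Finset.sum_range_one, Finset.prod_range_one, Finset.prod_range_zero]
      norm_num
      ring
  | succ N ih =>
      have hstep := step_int hx N (q - N - 1)
      have hexp : ∀ t : ℝ, (1 - t) ^ (N + 1) * (1 + t * x) ^ (q - ((N:ℝ) + 1) - 1) =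
          (1 - t) ^ (N + 1) * (1 + t * x) ^ (q - (N:ℝ) - 1 - 1) := by
        intro t
        have h : q - ((N:ℝ) + 1) - 1 = q - (N:ℝ) - 1 - 1 := by ring
        rw [h]
      rw [Finset.sum_range_succ, ih,
        Finset.prod_range_succ (fun i : ℕ => (q - (i:ℝ))) (N + 1)]
      have hfac : ((N + 1).factorial : ℝ) = ((N:ℝ) + 1) * (N.factorial : ℝ) := by
        rw [Nat.factorial_succ]; push_cast; ring
      rw [hfac]
      push_cast
      simp only [hexp]
      have hN : (N.factorial : ℝ) ≠ 0 := Nat.cast_ne_zero.mpr (Nat.factorial_ne_zero N)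
      have hN1 : ((N:ℝ) + 1) ≠ 0 := by positivity
      have hI : (∫ t in (0:ℝ)..1, (1 - t) ^ N * (1 + t * x) ^ (q - (N:ℝ) - 1)) =
          (1 + (q - (N:ℝ) - 1) * x *
            ∫ t in (0:ℝ)..1, (1 - t) ^ (N + 1) * (1 + t * x) ^ (q - (N:ℝ) - 1 - 1)) /
            ((N:ℝ) + 1) := by
        rw [eq_div_iff hN1]
        linarith [hstep]
      rw [hI]
      field_simp
      ring

private lemma phi_contOn (N : ℕ) (r : ℝ) :
    ContinuousOn (fun x : ℝ => ∫ t in (0:ℝ)..1, (1 - t) ^ N * (1 + t * x) ^ r)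
      (Set.Ioi (-1 : ℝ)) := by
  intro x₀ hx₀
  have hx₀' : (-1 : ℝ) < x₀ := hx₀
  refine ContinuousAt.continuousWithinAt ?_
  set ε : ℝ := min 1 ((1 + x₀) / 2) with hε_def
  have hε : 0 < ε := lt_min one_pos (by linarith)
  have hε1 : ε ≤ 1 := min_le_left _ _
  have hε2 : ε ≤ (1 + x₀) / 2 := min_le_right _ _
  set G : ℝ → ℝ := fun x => ∫ t in (0:ℝ)..1, (1 - t) ^ N * (max (1 + t * x) ε) ^ r with hG_def
  have hGcont : Continuous G := by
    apply intervalIntegral.continuous_parametric_intervalIntegral_of_continuous'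
    have h1 : Continuous fun p : ℝ × ℝ => max (1 + p.2 * p.1) ε := by fun_prop
    have h2 : Continuous fun p : ℝ × ℝ => (max (1 + p.2 * p.1) ε) ^ r :=
      h1.rpow_const fun p => Or.inl (lt_of_lt_of_le hε (le_max_right _ _)).ne'
    exact (by fun_prop : Continuous fun p : ℝ × ℝ => (1 - p.2) ^ N).mul h2
  have hU : Set.Ioi (ε - 1) ∈ nhds x₀ :=
    (isOpen_Ioi).mem_nhds (by simp only [Set.mem_Ioi]; linarith)
  have hEq : (fun x : ℝ => ∫ t in (0:ℝ)..1, (1 - t) ^ N * (1 + t * x) ^ r) =ᶠ[nhds x₀] G := by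
    filter_upwards [hU] with x hx
    apply intervalIntegral.integral_congr
    intro t ht
    rw [Set.uIcc_of_le zero_le_one] at ht
    have hpos : ε ≤ 1 + t * x := by
      rcases le_or_gt 0 x with h | h
      · nlinarith [ht.1, ht.2]
      · have : x > ε - 1 := hx
        nlinarith [ht.1, ht.2]
    simp [max_eq_left hpos]
  exact hGcont.continuousAt.congr hEq.symm

/-- Operator-level Taylor remainder factorization for the fractional power of a
selfadjoint element `X` of a unital C*-algebra with spectrum in `(−1, ∞)`:
`cfc ((1+·)^q) X = Σ_{n≤N} binom(q,n) • Xⁿ + X^{N+1} · cfc (Φ_N) X`, where `Φ_N` is the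
integral remainder amplitude. -/
theorem cfc_rpow_taylor_remainder {A : Type*} [CStarAlgebra A]
    (X : A) (hX : IsSelfAdjoint X) (hspec : spectrum ℝ X ⊆ Set.Ioi (-1 : ℝ))
    (q : ℝ) (N : ℕ) :
    cfc (fun x : ℝ => (1 + x) ^ q) X =
      (∑ n ∈ Finset.range (N + 1),
        ((∏ i ∈ Finset.range n, (q - i)) / (n.factorial : ℝ)) • X ^ n) +
      X ^ (N + 1) *
        cfc (fun x : ℝ =>
          ((∏ i ∈ Finset.range (N + 1), (q - i)) / (N.factorial : ℝ)) *
            ∫ t in (0:ℝ)..1, (1 - t) ^ N * (1 + t * x) ^ (q - N - 1)) X := by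
  have hΦ : ContinuousOn (fun x : ℝ =>
      ((∏ i ∈ Finset.range (N + 1), (q - i)) / (N.factorial : ℝ)) *
        ∫ t in (0:ℝ)..1, (1 - t) ^ N * (1 + t * x) ^ (q - N - 1)) (spectrum ℝ X) :=
    (continuousOn_const.mul (phi_contOn N (q - N - 1))).mono hspec
  have h1 : cfc (fun x : ℝ => (1 + x) ^ q) X =
      cfc (fun x : ℝ =>
        (∑ n ∈ Finset.range (N + 1),
          (∏ i ∈ Finset.range n, (q - i)) / (n.factorial : ℝ) * x ^ n) +
        x ^ (N + 1) * (((∏ i ∈ Finset.range (N + 1), (q - i)) / (N.factorial : ℝ)) *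
          ∫ t in (0:ℝ)..1, (1 - t) ^ N * (1 + t * x) ^ (q - N - 1))) X :=
    cfc_congr fun x hx => scalar_taylor q (hspec hx) N
  have hpow : ContinuousOn (fun x : ℝ => x ^ (N + 1)) (spectrum ℝ X) := by fun_prop
  have hsumc : ContinuousOn (fun x : ℝ =>
      ∑ n ∈ Finset.range (N + 1), (∏ i ∈ Finset.range n, (q - i)) / (n.factorial : ℝ) * x ^ n)
      (spectrum ℝ X) := by fun_prop
  rw [h1, cfc_add (a := X)
      (fun x : ℝ => ∑ n ∈ Finset.range (N + 1),
        (∏ i ∈ Finset.range n, (q - i)) / (n.factorial : ℝ) * x ^ n)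
      (fun x : ℝ => x ^ (N + 1) * (((∏ i ∈ Finset.range (N + 1), (q - i)) / (N.factorial : ℝ)) *
        ∫ t in (0:ℝ)..1, (1 - t) ^ N * (1 + t * x) ^ (q - N - 1)))
      hsumc (hpow.mul hΦ),
    cfc_mul (fun x : ℝ => x ^ (N + 1)) _ X hpow hΦ, cfc_pow_id X (N + 1) hX]
  congr 1
  have hsum : (fun x : ℝ =>
      ∑ n ∈ Finset.range (N + 1), (∏ i ∈ Finset.range n, (q - i)) / (n.factorial : ℝ) * x ^ n) =
      ∑ n ∈ Finset.range (N + 1),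
        (fun x : ℝ => (∏ i ∈ Finset.range n, (q - i)) / (n.factorial : ℝ) * x ^ n) := by
    ext x; simp
  rw [hsum, cfc_sum _ X _ (fun i _ => by fun_prop)]
  refine Finset.sum_congr rfl fun n _ => ?_
  rw [cfc_const_mul _ _ X (by fun_prop), cfc_pow_id X n hX]
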